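/- Let H be a simple edge-coloured graph in which each colour class has size at most r, and let R be a rainbow subgraph of H with |E(R)| = |V(R)| + k (excess-k) such that no proper subset of V(R) supports an excess-k rainbow subgraph of H. Then either H contains two parallel edges of distinct colours, or the number of chords of R in H (edges of H with both ends in V(R) not belonging to R) is at most max{C(2k+2, 2), 6k(r-1)}. -/

import Mathlib

open Finset
open scoped Classical

namespace MinRainbowAux

variable {V E C : Type} [Fintype V] [Fintype E]

/-- The vertex set of a set of edges. -/
def VS (ends : E → Sym2 V) (T : Set E) : Set V := {v : V | ∃ e ∈ T, v ∈ ends e}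

/-- The degree of a vertex in an edge set. -/
noncomputable def degS (ends : E → Sym2 V) (T : Set E) (v : V) : ℕ :=
  {e ∈ T | v ∈ ends e}.ncard

lemma aux_eq_pair {q : Sym2 V} {a b : V} (hab : a ≠ b) (ha : a ∈ q) (hb : b ∈ q) :
    q = s(a, b) := by
  induction q using Sym2.ind with
  | _ x y =>
    rw [Sym2.mem_iff] at ha hb
    rcases ha with rfl | rfl <;> rcases hb with rfl | rfl <;> simp_all [Sym2.eq_iff]

lemma aux_two (ends : E → Sym2 V) {e : E} (he : ¬ (ends e).IsDiag) :
    (Finset.univ.filter (fun v : V => v ∈ ends e)).card = 2 := by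
  have h : ∀ p : Sym2 V, ¬ p.IsDiag →
      (Finset.univ.filter (fun v : V => v ∈ p)).card = 2 := by
    intro p
    induction p using Sym2.ind with
    | _ a b =>
      intro hp
      rw [Sym2.mk_isDiag_iff] at hp
      have hset : Finset.univ.filter (fun v : V => v ∈ s(a, b)) = {a, b} := by
        ext v; simp [Sym2.mem_iff]
      rw [hset, Finset.card_pair hp]
  exact h _ he

lemma deg_eq_filter (ends : E → Sym2 V) (T : Set E) (v : V) :
    degS ends T v = (T.toFinset.filter (fun e => v ∈ ends e)).card := by
  rw [degS, Set.ncard_eq_toFinset_card']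
  have hset : {e ∈ T | v ∈ ends e}.toFinset = T.toFinset.filter (fun e => v ∈ ends e) := by
    ext e; simp
  rw [hset]

lemma aux_degsum (ends : E → Sym2 V) (hloop : ∀ e, ¬ (ends e).IsDiag) (T : Set E) :
    ∑ v : V, degS ends T v = 2 * T.ncard := by
  calc ∑ v : V, degS ends T v
      = ∑ v : V, ∑ e ∈ T.toFinset, if v ∈ ends e then 1 else 0 := by
        simp_rw [deg_eq_filter, Finset.card_filter]
    _ = ∑ e ∈ T.toFinset, ∑ v : V, if v ∈ ends e then 1 else 0 := Finset.sum_comm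
    _ = ∑ e ∈ T.toFinset, 2 := by
        refine Finset.sum_congr rfl fun e _ => ?_
        rw [← Finset.card_filter]
        exact aux_two ends (hloop e)
    _ = 2 * T.ncard := by
        rw [Finset.sum_const, Set.ncard_eq_toFinset_card', smul_eq_mul, mul_comm]

lemma aux_pendant (ends : E → Sym2 V) (T : Set E)
    (h : (VS ends T).ncard + 1 ≤ T.ncard) :
    ∃ g ∈ T, ∀ v ∈ ends g, ∃ g' ∈ T, g' ≠ g ∧ v ∈ ends g' := by
  have hTne : T.Nonempty := by
    rw [← Set.ncard_pos (Set.toFinite _)]; omega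
  obtain ⟨e0, he0⟩ := hTne
  have hV : Nonempty V := by
    have : ∀ p : Sym2 V, Nonempty V := by
      intro p; induction p using Sym2.ind with
      | _ a b => exact ⟨a⟩
    exact this (ends e0)
  by_contra hc
  push_neg at hc
  choose! φ hφ1 hφ2 using hc
  have hmaps : ∀ g ∈ T, φ g ∈ VS ends T := fun g hg => ⟨g, hg, hφ1 g hg⟩
  have hinj : Set.InjOn φ T := by
    intro g1 h1 g2 h2 hEq
    by_contra hne
    have hmem : φ g1 ∈ ends g2 := by rw [hEq]; exact hφ1 g2 h2
    exact hφ2 g1 h1 g2 h2 (Ne.symm hne) hmem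
  have := Set.ncard_le_ncard_of_injOn φ hmaps hinj (Set.toFinite _)
  omega

lemma aux_reduce (ends : E → Sym2 V) (col : E → C) (S : Set E) (k : ℕ)
    (hmin : ∀ S' : Set E, Set.InjOn col S' →
      S'.ncard = (VS ends S').ncard + k → ¬ (VS ends S' ⊂ VS ends S)) :
    ∀ n (T : Set E), T.ncard = n → Set.InjOn col T → VS ends T ⊂ VS ends S →
      (VS ends T).ncard + k ≤ T.ncard → False := by
  intro n
  induction n using Nat.strong_induction_on with
  | _ n ih =>
    intro T hn hTinj hss hcard
    subst hn
    rcases eq_or_lt_of_le hcard with heq | hlt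
    · exact hmin T hTinj heq.symm hss
    · obtain ⟨g, hgT, hg⟩ := aux_pendant ends T (by omega)
      have hVSeq : VS ends (T \ {g}) = VS ends T := by
        ext v
        constructor
        · rintro ⟨e, he, hv⟩; exact ⟨e, he.1, hv⟩
        · rintro ⟨e, he, hv⟩
          by_cases heg : e = g
          · obtain ⟨g', hg', hne, hv'⟩ := hg v (heg ▸ hv)
            exact ⟨g', ⟨hg', hne⟩, hv'⟩
          · exact ⟨e, ⟨he, heg⟩, hv⟩
      have hcard' : (T \ {g}).ncard = T.ncard - 1 :=
        Set.ncard_diff_singleton_of_mem hgT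
      exact ih (T.ncard - 1) (by omega) (T \ {g}) hcard'
        (hTinj.mono Set.diff_subset) (hVSeq ▸ hss) (by rw [hcard', hVSeq]; omega)

lemma aux_mindeg (ends : E → Sym2 V) (col : E → C) (S : Set E) (k : ℕ)
    (hmin : ∀ S' : Set E, Set.InjOn col S' →
      S'.ncard = (VS ends S').ncard + k → ¬ (VS ends S' ⊂ VS ends S))
    (T : Set E) (hTinj : Set.InjOn col T) (hVT : VS ends T = VS ends S)
    (hTcard : T.ncard = (VS ends S).ncard + k)
    (v : V) (hv : v ∈ VS ends S) : 2 ≤ degS ends T v := by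
  have hWpos : 1 ≤ (VS ends S).ncard :=
    (Set.ncard_pos (Set.toFinite _)).mpr ⟨v, hv⟩
  have h1 : 1 ≤ degS ends T v := by
    rw [← hVT] at hv
    obtain ⟨e, he, hve⟩ := hv
    exact (Set.ncard_pos (Set.toFinite _)).mpr ⟨e, he, hve⟩
  by_contra h2
  have hdeg1 : degS ends T v = 1 := by omega
  obtain ⟨f, hf⟩ := Set.ncard_eq_one.mp hdeg1
  have hfT : f ∈ T ∧ v ∈ ends f := by
    have : f ∈ {e ∈ T | v ∈ ends e} := by rw [hf]; rfl
    exact this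
  have hsub : VS ends (T \ {f}) ⊆ VS ends S \ {v} := by
    rintro w ⟨e, ⟨heT, hef⟩, hw⟩
    refine ⟨hVT ▸ ⟨e, heT, hw⟩, ?_⟩
    intro hwv
    rw [Set.mem_singleton_iff] at hwv
    subst hwv
    have : e ∈ {e ∈ T | w ∈ ends e} := ⟨heT, hw⟩
    rw [hf] at this
    exact hef this
  have hnotin : v ∉ VS ends (T \ {f}) := fun hvv => (hsub hvv).2 rfl
  have hssub : VS ends (T \ {f}) ⊂ VS ends S :=
    (Set.ssubset_iff_of_subset (hsub.trans Set.diff_subset)).mpr ⟨v, hv, hnotin⟩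
  have hc1 : (T \ {f}).ncard = T.ncard - 1 :=
    Set.ncard_diff_singleton_of_mem hfT.1
  have hc2 : (VS ends (T \ {f})).ncard ≤ (VS ends S).ncard - 1 := by
    calc (VS ends (T \ {f})).ncard ≤ (VS ends S \ {v}).ncard :=
          Set.ncard_le_ncard hsub (Set.toFinite _)
      _ = (VS ends S).ncard - 1 := Set.ncard_diff_singleton_of_mem hv
  exact aux_reduce ends col S k hmin _ (T \ {f}) rfl (hTinj.mono Set.diff_subset)
    hssub (by omega)

lemma aux_repr (p : Sym2 V) : ∃ a b, p = s(a, b) := by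
  induction p using Sym2.ind with
  | _ a b => exact ⟨a, b, rfl⟩

end MinRainbowAux

theorem minimal_rainbow_few_chords {V E C : Type} [Fintype V] [Fintype E]
    (r k : ℕ) (hk : 1 ≤ k) (hr : 1 ≤ r)
    (ends : E → Sym2 V) (hloop : ∀ e, ¬ (ends e).IsDiag)
    (col : E → C)
    (hsimple : ∀ e f, col e = col f → ends e = ends f → e = f)
    (hsize : ∀ a : C, {e : E | col e = a}.ncard ≤ r)
    (S : Set E) (hrainbow : Set.InjOn col S)
    (hexc : S.ncard = {v : V | ∃ e ∈ S, v ∈ ends e}.ncard + k)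
    (hmin : ∀ S' : Set E, Set.InjOn col S' →
      S'.ncard = {v : V | ∃ e ∈ S', v ∈ ends e}.ncard + k →
      ¬ ({v : V | ∃ e ∈ S', v ∈ ends e} ⊂ {v : V | ∃ e ∈ S, v ∈ ends e})) :
    (∃ e f, ends e = ends f ∧ col e ≠ col f) ∨
      {e : E | e ∉ S ∧ ∀ v ∈ ends e, v ∈ {w : V | ∃ e' ∈ S, w ∈ ends e'}}.ncard ≤
        max ((2 * k + 2).choose 2) (6 * k * (r - 1)) := by
  classical
  by_cases hpar : ∃ e f, ends e = ends f ∧ col e ≠ col f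
  · exact Or.inl hpar
  right
  push_neg at hpar
  have hendsInj : Function.Injective ends := fun e f h => hsimple e f (hpar e f h) h
  set W : Set V := MinRainbowAux.VS ends S with hW
  have hexc' : S.ncard = W.ncard + k := hexc
  have hmin' : ∀ S' : Set E, Set.InjOn col S' →
      S'.ncard = (MinRainbowAux.VS ends S').ncard + k →
      ¬ (MinRainbowAux.VS ends S' ⊂ W) := hmin
  have hmindeg : ∀ T : Set E, Set.InjOn col T → MinRainbowAux.VS ends T = W →
      T.ncard = W.ncard + k → ∀ v ∈ W, 2 ≤ MinRainbowAux.degS ends T v :=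
    fun T h1 h2 h3 v hv => MinRainbowAux.aux_mindeg ends col S k hmin' T h1 h2 h3 v hv
  have hreduce : ∀ T : Set E, Set.InjOn col T → MinRainbowAux.VS ends T ⊂ W →
      (MinRainbowAux.VS ends T).ncard + k ≤ T.ncard → False :=
    fun T h1 h2 h3 => MinRainbowAux.aux_reduce ends col S k hmin' _ T rfl h1 h2 h3
  set dg : V → ℕ := MinRainbowAux.degS ends S with hdg
  have hmindegS : ∀ v ∈ W, 2 ≤ dg v := hmindeg S hrainbow rfl hexc'
  set Ch : Set E := {e : E | e ∉ S ∧ ∀ v ∈ ends e, v ∈ W} with hCh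
  show Ch.ncard ≤ max ((2 * k + 2).choose 2) (6 * k * (r - 1))
  -- degree bookkeeping
  have hdegsum : ∑ v : V, dg v = 2 * S.ncard := MinRainbowAux.aux_degsum ends hloop S
  set WF : Finset V := W.toFinset with hWF
  have hWFcard : WF.card = W.ncard := (Set.ncard_eq_toFinset_card' W).symm
  have hdg0 : ∀ v ∈ Finset.univ, v ∉ WF → dg v = 0 := by
    intro v _ hv
    rw [hWF, Set.mem_toFinset] at hv
    have hempty : {e ∈ S | v ∈ ends e} = (∅ : Set E) := by
      ext g
      simp only [Set.mem_setOf_eq, Set.mem_empty_iff_false, iff_false, not_and]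
      intro hgS hvg
      exact absurd ⟨g, hgS, hvg⟩ hv
    rw [hdg, MinRainbowAux.degS, hempty, Set.ncard_empty]
  have hsumW : ∑ v ∈ WF, dg v = 2 * (W.ncard + k) := by
    rw [Finset.sum_subset (Finset.subset_univ WF) hdg0, hdegsum, hexc']
  set Big : Finset V := WF.filter (fun v => 3 ≤ dg v) with hBig
  set Small : Finset V := WF.filter (fun v => ¬ 3 ≤ dg v) with hSmall
  have hsmall2 : ∀ v ∈ Small, dg v = 2 := by
    intro v hv
    rw [hSmall, Finset.mem_filter, hWF, Set.mem_toFinset] at hv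
    have := hmindegS v hv.1
    omega
  have hsplit : ∑ v ∈ Big, dg v + ∑ v ∈ Small, dg v = ∑ v ∈ WF, dg v :=
    Finset.sum_filter_add_sum_filter_not WF _ dg
  have hsmallsum : ∑ v ∈ Small, dg v = 2 * Small.card := by
    rw [Finset.sum_congr rfl hsmall2, Finset.sum_const, smul_eq_mul, mul_comm]
  have hcards : Big.card + Small.card = WF.card :=
    Finset.card_filter_add_card_filter_not _
  have h3b : 3 * Big.card ≤ ∑ v ∈ Big, dg v := by
    have := Finset.card_nsmul_le_sum Big dg 3 (fun v hv => (Finset.mem_filter.mp hv).2)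
    simpa [mul_comm] using this
  have hBigsum : ∑ v ∈ Big, dg v ≤ 6 * k := by omega
  have hBigcard : Big.card ≤ 2 * k := by omega
  -- eligible edges: edges of S with an endpoint of degree at least 3
  set Elig : Finset E := S.toFinset.filter (fun f => ∃ v ∈ ends f, 3 ≤ dg v) with hElig
  have hEligcard : Elig.card ≤ 6 * k := by
    have hsub : Elig ⊆ Big.biUnion (fun v => S.toFinset.filter (fun e => v ∈ ends e)) := by
      intro f hf
      rw [hElig, Finset.mem_filter] at hf
      obtain ⟨hfS, v, hvf, hv3⟩ := hf
      refine Finset.mem_biUnion.mpr ⟨v, ?_, Finset.mem_filter.mpr ⟨hfS, hvf⟩⟩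
      rw [hBig, Finset.mem_filter]
      refine ⟨?_, hv3⟩
      rw [hWF, Set.mem_toFinset]
      exact ⟨f, Set.mem_toFinset.mp hfS, hvf⟩
    calc Elig.card ≤ (Big.biUnion (fun v => S.toFinset.filter (fun e => v ∈ ends e))).card :=
          Finset.card_le_card hsub
      _ ≤ ∑ v ∈ Big, (S.toFinset.filter (fun e => v ∈ ends e)).card := Finset.card_biUnion_le
      _ = ∑ v ∈ Big, dg v := by
          refine Finset.sum_congr rfl fun v _ => ?_
          rw [hdg]
          exact (MinRainbowAux.deg_eq_filter ends S v).symm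
      _ ≤ 6 * k := hBigsum
  by_cases hWsize : W.ncard ≤ 2 * k + 2
  · -- small vertex set: count all possible pairs
    have hchsub : Ch.toFinset.image ends ⊆ WF.offDiag.image Sym2.mk.uncurry := by
      intro p hp
      rw [Finset.mem_image] at hp
      obtain ⟨e, heF, rfl⟩ := hp
      have he : e ∈ Ch := Set.mem_toFinset.mp heF
      obtain ⟨a, b, hab⟩ := MinRainbowAux.aux_repr (ends e)
      have hane : a ≠ b := by
        have := hloop e
        rw [hab, Sym2.mk_isDiag_iff] at this
        exact this
      have haW : a ∈ WF := by
        rw [hWF, Set.mem_toFinset]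
        exact he.2 a (by rw [hab]; simp)
      have hbW : b ∈ WF := by
        rw [hWF, Set.mem_toFinset]
        exact he.2 b (by rw [hab]; simp)
      rw [Finset.mem_image]
      exact ⟨(a, b), Finset.mem_offDiag.mpr ⟨haW, hbW, hane⟩, hab.symm⟩
    have h1 : Ch.ncard ≤ W.ncard.choose 2 := by
      rw [Set.ncard_eq_toFinset_card']
      calc Ch.toFinset.card = (Ch.toFinset.image ends).card :=
            (Finset.card_image_of_injective _ hendsInj).symm
        _ ≤ (WF.offDiag.image Sym2.mk.uncurry).card := Finset.card_le_card hchsub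
        _ = WF.card.choose 2 := Sym2.card_image_offDiag WF
        _ = W.ncard.choose 2 := by rw [hWFcard]
    exact le_trans (h1.trans (Nat.choose_le_choose 2 hWsize)) (le_max_left _ _)
  · -- large vertex set
    push_neg at hWsize
    have hSmall3 : 3 ≤ Small.card := by omega
    -- Step 1: each chord shares a colour with an edge of S
    have hcolS : ∀ e ∈ Ch, ∃ f ∈ S, col f = col e := by
      intro e he
      by_contra hno
      push_neg at hno
      have hP : (Finset.univ.filter (fun v : V => v ∈ ends e)).card = 2 :=
        MinRainbowAux.aux_two ends (hloop e)
      have hsd := le_card_sdiff (Finset.univ.filter (fun v : V => v ∈ ends e)) Small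
      obtain ⟨v, hv⟩ := Finset.card_pos.mp
        (show 0 < (Small \ Finset.univ.filter (fun v : V => v ∈ ends e)).card by omega)
      rw [Finset.mem_sdiff] at hv
      have hvW : v ∈ W := by
        have := hv.1
        rw [hSmall, Finset.mem_filter, hWF, Set.mem_toFinset] at this
        exact this.1
      have hdv : dg v = 2 := hsmall2 v hv.1
      have hve : v ∉ ends e := by
        intro hmem
        exact hv.2 (Finset.mem_filter.mpr ⟨Finset.mem_univ v, hmem⟩)
      set D : Set E := {g ∈ S | v ∈ ends g} with hD
      have hDcard : D.ncard = 2 := by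
        rw [hdg, MinRainbowAux.degS] at hdv
        exact hdv
      have heS : e ∉ S := he.1
      have hins : Set.InjOn col (insert e S) := by
        rw [Set.injOn_insert heS]
        refine ⟨hrainbow, ?_⟩
        rintro ⟨f, hfS, hcf⟩
        exact hno f hfS hcf
      set T' : Set E := insert e S \ D with hT'
      have hT'inj : Set.InjOn col T' := hins.mono Set.diff_subset
      have hvT' : v ∉ MinRainbowAux.VS ends T' := by
        rintro ⟨g, ⟨hgIns, hgD⟩, hvg⟩
        rcases hgIns with rfl | hgS
        · exact hve hvg
        · exact hgD ⟨hgS, hvg⟩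
      have hsubW : MinRainbowAux.VS ends T' ⊆ W := by
        rintro w ⟨g, ⟨hgIns, _⟩, hwg⟩
        rcases hgIns with rfl | hgS
        · exact he.2 w hwg
        · exact ⟨g, hgS, hwg⟩
      have hssW : MinRainbowAux.VS ends T' ⊂ W :=
        (Set.ssubset_iff_of_subset hsubW).mpr ⟨v, hvW, hvT'⟩
      have hT'card : T'.ncard = S.ncard + 1 - 2 := by
        have h1 : (insert e S).ncard = S.ncard + 1 :=
          Set.ncard_insert_of_notMem heS (Set.toFinite _)
        have h2 : D ⊆ insert e S := fun g hg => Set.mem_insert_of_mem _ hg.1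
        rw [hT', Set.ncard_diff h2 (Set.toFinite _), h1, hDcard]
      have hVT'card : (MinRainbowAux.VS ends T').ncard ≤ W.ncard - 1 := by
        have hsub' : MinRainbowAux.VS ends T' ⊆ W \ {v} :=
          fun w hw => ⟨hsubW hw, fun hwv => hvT' (Set.mem_singleton_iff.mp hwv ▸ hw)⟩
        calc (MinRainbowAux.VS ends T').ncard ≤ (W \ {v}).ncard :=
              Set.ncard_le_ncard hsub' (Set.toFinite _)
          _ = W.ncard - 1 := Set.ncard_diff_singleton_of_mem hvW
      exact hreduce T' hT'inj hssW (by omega)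
    -- Step 2: the matching edge of S has an endpoint of degree at least 3
    have hbig : ∀ e ∈ Ch, ∀ f ∈ S, col f = col e → ∃ v ∈ ends f, 3 ≤ dg v := by
      intro e he f hfS hcol
      by_contra hnb
      push_neg at hnb
      have hf2 : ∀ w ∈ ends f, dg w = 2 := by
        intro w hw
        have h2 := hmindegS w ⟨f, hfS, hw⟩
        have h3 := hnb w hw
        omega
      have heS : e ∉ S := he.1
      have heSf : e ∉ S \ {f} := fun h => heS h.1
      set S' : Set E := insert e (S \ {f}) with hS'
      have hS'inj : Set.InjOn col S' := by
        rw [hS', Set.injOn_insert heSf]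
        refine ⟨hrainbow.mono Set.diff_subset, ?_⟩
        rintro ⟨g, ⟨hgS, hgf⟩, hcg⟩
        exact hgf (Set.mem_singleton_iff.mpr (hrainbow hgS hfS (by rw [hcg, hcol])))
      have hVS' : MinRainbowAux.VS ends S' = W := by
        ext w
        constructor
        · rintro ⟨g, hg, hwg⟩
          rcases hg with rfl | hgS
          · exact he.2 w hwg
          · exact ⟨g, hgS.1, hwg⟩
        · rintro ⟨g, hgS, hwg⟩
          by_cases hgf : g = f
          · rw [hgf] at hwg
            have hw2 : ({h ∈ S | w ∈ ends h}).ncard = 2 := by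
              have := hf2 w hwg
              rw [hdg, MinRainbowAux.degS] at this
              exact this
            obtain ⟨a, b, habne, hset⟩ := Set.ncard_eq_two.mp hw2
            have haS : a ∈ S ∧ w ∈ ends a := by
              have : a ∈ {h ∈ S | w ∈ ends h} := by rw [hset]; exact Set.mem_insert _ _
              exact this
            have hbS : b ∈ S ∧ w ∈ ends b := by
              have : b ∈ {h ∈ S | w ∈ ends h} := by
                rw [hset]; exact Set.mem_insert_of_mem _ rfl
              exact this
            rcases eq_or_ne a f with rfl | haf
            · have hbf : b ≠ a := fun h => habne h.symm
              exact ⟨b, Set.mem_insert_of_mem _ ⟨hbS.1, hbf⟩, hbS.2⟩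
            · exact ⟨a, Set.mem_insert_of_mem _ ⟨haS.1, haf⟩, haS.2⟩
          · exact ⟨g, Set.mem_insert_of_mem _ ⟨hgS, hgf⟩, hwg⟩
      have hSpos : 1 ≤ S.ncard := (Set.ncard_pos (Set.toFinite _)).mpr ⟨f, hfS⟩
      have hS'card : S'.ncard = W.ncard + k := by
        rw [hS', Set.ncard_insert_of_notMem heSf (Set.toFinite _),
          Set.ncard_diff_singleton_of_mem hfS]
        omega
      have hkey : ∀ w ∈ ends f, w ∈ ends e := by
        intro w hwf
        by_contra hwe
        have h2 := hmindeg S' hS'inj hVS' hS'card w ⟨f, hfS, hwf⟩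
        have hseteq : {g ∈ S' | w ∈ ends g} = {g ∈ S | w ∈ ends g} \ {f} := by
          ext g
          simp only [hS', Set.mem_insert_iff, Set.mem_setOf_eq, Set.mem_diff,
            Set.mem_singleton_iff]
          constructor
          · rintro ⟨rfl | ⟨hgS, hgf⟩, hwg⟩
            · exact absurd hwg hwe
            · exact ⟨⟨hgS, hwg⟩, hgf⟩
          · rintro ⟨⟨hgS, hwg⟩, hgf⟩
            exact ⟨Or.inr ⟨hgS, hgf⟩, hwg⟩
        have hfmem : f ∈ {g ∈ S | w ∈ ends g} := ⟨hfS, hwf⟩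
        have hw2 : ({g ∈ S | w ∈ ends g}).ncard = 2 := by
          have := hf2 w hwf
          rw [hdg, MinRainbowAux.degS] at this
          exact this
        have hone : MinRainbowAux.degS ends S' w = 1 := by
          rw [MinRainbowAux.degS, hseteq,
            Set.ncard_diff_singleton_of_mem hfmem, hw2]
        rw [hone] at h2
        omega
      obtain ⟨a, b, habf⟩ := MinRainbowAux.aux_repr (ends f)
      have hane : a ≠ b := by
        have := hloop f
        rw [habf, Sym2.mk_isDiag_iff] at this
        exact this
      have hae : a ∈ ends e := hkey a (by rw [habf]; simp)
      have hbe : b ∈ ends e := hkey b (by rw [habf]; simp)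
      have hEq : ends e = ends f := by
        rw [habf]
        exact MinRainbowAux.aux_eq_pair hane hae hbe
      have hef : e = f := hsimple e f hcol.symm hEq
      exact heS (hef ▸ hfS)
    -- final counting
    have hChsub : Ch.toFinset ⊆
        Elig.biUnion (fun f => (Finset.univ.filter (fun g => col g = col f)).erase f) := by
      intro e heF
      have he : e ∈ Ch := Set.mem_toFinset.mp heF
      obtain ⟨f, hfS, hcf⟩ := hcolS e he
      have hbigf := hbig e he f hfS hcf
      refine Finset.mem_biUnion.mpr ⟨f, ?_, ?_⟩
      · rw [hElig, Finset.mem_filter]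
        exact ⟨Set.mem_toFinset.mpr hfS, hbigf⟩
      · refine Finset.mem_erase.mpr ⟨?_, Finset.mem_filter.mpr ⟨Finset.mem_univ _, hcf.symm⟩⟩
        rintro rfl
        exact he.1 hfS
    have hclass : ∀ f : E,
        ((Finset.univ.filter (fun g => col g = col f)).erase f).card ≤ r - 1 := by
      intro f
      have hfmem : f ∈ Finset.univ.filter (fun g => col g = col f) := by simp
      rw [Finset.card_erase_of_mem hfmem]
      have hs := hsize (col f)
      have hcc : {g : E | col g = col f}.ncard =
          (Finset.univ.filter (fun g => col g = col f)).card := by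
        rw [Set.ncard_eq_toFinset_card']
        congr 1
        ext g
        simp
      omega
    calc Ch.ncard = Ch.toFinset.card := Set.ncard_eq_toFinset_card' Ch
      _ ≤ (Elig.biUnion
            (fun f => (Finset.univ.filter (fun g => col g = col f)).erase f)).card :=
          Finset.card_le_card hChsub
      _ ≤ ∑ f ∈ Elig, ((Finset.univ.filter (fun g => col g = col f)).erase f).card :=
          Finset.card_biUnion_le
      _ ≤ Elig.card * (r - 1) := by
          have := Finset.sum_le_card_nsmul Elig _ (r - 1) (fun f _ => hclass f)
          simpa [mul_comm] using this
      _ ≤ 6 * k * (r - 1) := Nat.mul_le_mul_right _ hEligcard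
      _ ≤ max ((2 * k + 2).choose 2) (6 * k * (r - 1)) := le_max_right _ _
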